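/- arXiv:1411.3757 — 2 statements merged into one kernel-verified Lean document; each statement's English description precedes it below -/
import Mathlib

section
/- If X_i are independent Bernoulli random variables with success probabilities p_i and Z is Poisson with mean M = Σ p_i, then the total variation distance between the law of Σ X_i and the Poisson distribution with mean M is at most Σ p_i². -/
open MeasureTheory ProbabilityTheory

/-- Total variation distance between two measures. -/
noncomputable def tvDist {X : Type*} [MeasurableSpace X] (μ ν : Measure X) : ℝ :=
  ⨆ A : {A : Set X // MeasurableSet A}, |(μ A.1).toReal - (ν A.1).toReal|

section Basics
variable {X : Type*} [MeasurableSpace X] (μ ν ρ : Measure X)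

lemma abs_bdd [IsProbabilityMeasure μ] [IsProbabilityMeasure ν] (A : Set X) :
    |(μ A).toReal - (ν A).toReal| ≤ 2 := by
  have h1 : (μ A).toReal ≤ 1 := by
    have := prob_le_one (μ := μ) (s := A)
    simpa using ENNReal.toReal_mono ENNReal.one_ne_top this
  have h2 : (ν A).toReal ≤ 1 := by
    have := prob_le_one (μ := ν) (s := A)
    simpa using ENNReal.toReal_mono ENNReal.one_ne_top this
  have h3 : 0 ≤ (μ A).toReal := ENNReal.toReal_nonneg
  have h4 : 0 ≤ (ν A).toReal := ENNReal.toReal_nonneg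
  rw [abs_le]; constructor <;> nlinarith

lemma tvDist_le {r : ℝ}
    (h : ∀ A : Set X, MeasurableSet A → |(μ A).toReal - (ν A).toReal| ≤ r) :
    tvDist μ ν ≤ r :=
  ciSup_le (fun A => h A.1 A.2)

lemma le_tvDist [IsProbabilityMeasure μ] [IsProbabilityMeasure ν] {A : Set X}
    (hA : MeasurableSet A) : |(μ A).toReal - (ν A).toReal| ≤ tvDist μ ν :=
  le_ciSup (f := fun A : {A : Set X // MeasurableSet A} => |(μ A.1).toReal - (ν A.1).toReal|)
    ⟨2, by rintro x ⟨B, rfl⟩; exact abs_bdd μ ν B.1⟩ ⟨A, hA⟩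

lemma tvDist_nonneg [IsProbabilityMeasure μ] [IsProbabilityMeasure ν] :
    0 ≤ tvDist μ ν := by
  have := le_tvDist μ ν MeasurableSet.empty
  simpa using this

lemma tvDist_triangle [IsProbabilityMeasure μ] [IsProbabilityMeasure ν]
    [IsProbabilityMeasure ρ] : tvDist μ ρ ≤ tvDist μ ν + tvDist ν ρ := by
  apply tvDist_le
  intro A hA
  calc |(μ A).toReal - (ρ A).toReal|
      ≤ |(μ A).toReal - (ν A).toReal| + |(ν A).toReal - (ρ A).toReal| := abs_sub_le _ _ _
    _ ≤ tvDist μ ν + tvDist ν ρ := add_le_add (le_tvDist μ ν hA) (le_tvDist ν ρ hA)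

end Basics

section NatMeasures
variable (μ ν : Measure ℕ)

/-- masses as reals -/
noncomputable def mss (μ : Measure ℕ) (k : ℕ) : ℝ := (μ {k}).toReal

lemma mss_nonneg (k : ℕ) : 0 ≤ mss μ k := ENNReal.toReal_nonneg

lemma hasSum_mss [IsProbabilityMeasure μ] : HasSum (mss μ) 1 := by
  have h : (∑' k : ℕ, μ {k}) = 1 := by
    have := Measure.tsum_indicator_apply_singleton μ Set.univ MeasurableSet.univ
    simpa using this
  have hne : ∀ k, μ {k} ≠ ⊤ := fun k => (measure_lt_top μ _).ne
  have := ENNReal.tsum_toReal_eq hne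
  rw [h] at this
  simp only [ENNReal.toReal_one] at this
  have hs : Summable (mss μ) := ENNReal.summable_toReal (by rw [h]; exact ENNReal.one_ne_top)
  exact this ▸ hs.hasSum

lemma summable_mss [IsProbabilityMeasure μ] : Summable (mss μ) := (hasSum_mss μ).summable

lemma tsum_mss [IsProbabilityMeasure μ] : ∑' k, mss μ k = 1 := (hasSum_mss μ).tsum_eq

lemma apply_toReal_eq [IsFiniteMeasure μ] (A : Set ℕ) (hA : MeasurableSet A) :
    (μ A).toReal = ∑' k, A.indicator (mss μ) k := by
  have h := (Measure.tsum_indicator_apply_singleton μ A hA).symm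
  rw [h, ENNReal.tsum_toReal_eq]
  · congr 1; ext k
    by_cases hk : k ∈ A <;> simp [Set.indicator_apply, hk, mss]
  · intro k
    by_cases hk : k ∈ A <;> simp [Set.indicator_apply, hk, (measure_lt_top μ _).ne]

lemma summable_indicator_mss [IsProbabilityMeasure μ] (A : Set ℕ) :
    Summable (A.indicator (mss μ)) :=
  (summable_mss μ).of_nonneg_of_le
    (fun k => Set.indicator_nonneg (fun k _ => mss_nonneg μ k) k)
    (fun k => Set.indicator_le_self' (fun k _ => mss_nonneg μ k) k)

/-- TV distance bounded by the sum of positive parts of mass differences. -/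
lemma tvDist_le_posPart [IsProbabilityMeasure μ] [IsProbabilityMeasure ν] :
    tvDist μ ν ≤ ∑' k, max (mss μ k - mss ν k) 0 := by
  set d : ℕ → ℝ := fun k => max (mss μ k - mss ν k) 0 with hd
  set e : ℕ → ℝ := fun k => max (mss ν k - mss μ k) 0 with he
  have hdsum : Summable d := (summable_mss μ).of_nonneg_of_le
    (fun k => le_max_right _ _)
    (fun k => max_le (sub_le_self _ (mss_nonneg ν k)) (mss_nonneg μ k))
  have hesum : Summable e := (summable_mss ν).of_nonneg_of_le
    (fun k => le_max_right _ _)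
    (fun k => max_le (sub_le_self _ (mss_nonneg μ k)) (mss_nonneg ν k))
  have hde : ∀ k, d k - e k = mss μ k - mss ν k := by
    intro k
    rcases le_total (mss μ k) (mss ν k) with h | h
    · simp [hd, he, max_eq_right (sub_nonpos.2 h), max_eq_left (sub_nonneg.2 h)]
    · simp [hd, he, max_eq_left (sub_nonneg.2 h), max_eq_right (sub_nonpos.2 h)]
  have hsum_eq : ∑' k, e k = ∑' k, d k := by
    have h1 : ∑' k, (d k - e k) = ∑' k, d k - ∑' k, e k := Summable.tsum_sub hdsum hesum
    have h2 : ∑' k, (d k - e k) = 0 := by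
      have : ∀ k, d k - e k = mss μ k - mss ν k := hde
      rw [tsum_congr this, Summable.tsum_sub (summable_mss μ) (summable_mss ν), tsum_mss, tsum_mss]
      ring
    linarith [h1, h2]
  apply tvDist_le
  intro A hA
  rw [apply_toReal_eq μ A hA, apply_toReal_eq ν A hA]
  rw [← Summable.tsum_sub (summable_indicator_mss μ A) (summable_indicator_mss ν A)]
  have hsub : Summable (fun k => A.indicator (mss μ) k - A.indicator (mss ν) k) :=
    (summable_indicator_mss μ A).sub (summable_indicator_mss ν A)
  rw [abs_le]
  constructor
  · rw [neg_le, ← tsum_neg]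
    calc ∑' k, -(A.indicator (mss μ) k - A.indicator (mss ν) k)
        ≤ ∑' k, e k := by
          apply Summable.tsum_le_tsum _ hsub.neg hesum
          intro k
          by_cases hk : k ∈ A
          · simp only [Set.indicator_of_mem hk]
            calc -(mss μ k - mss ν k) = mss ν k - mss μ k := by ring
              _ ≤ e k := le_max_left _ _
          · simp only [Set.indicator_of_notMem hk]
            simpa [he] using le_max_right (mss ν k - mss μ k) 0
      _ = ∑' k, d k := hsum_eq
  · calc ∑' k, (A.indicator (mss μ) k - A.indicator (mss ν) k)
        ≤ ∑' k, d k := by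
          apply Summable.tsum_le_tsum _ hsub hdsum
          intro k
          by_cases hk : k ∈ A
          · simp only [Set.indicator_of_mem hk]; exact le_max_left _ _
          · simp only [Set.indicator_of_notMem hk]
            simpa [hd] using le_max_right (mss μ k - mss ν k) 0

end NatMeasures
section Conv

lemma conv_apply (μ ν : Measure ℕ) [IsProbabilityMeasure μ] [IsProbabilityMeasure ν]
    (A : Set ℕ) (hA : MeasurableSet A) :
    (μ.conv ν) A = ∑' x, ν {y | x + y ∈ A} * μ {x} := by
  rw [Measure.conv, Measure.map_apply (measurable_of_countable _) hA,
    Measure.prod_apply (measurable_of_countable _ hA)]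
  rw [lintegral_countable' (fun x => ν (Prod.mk x ⁻¹' ((fun p : ℕ × ℕ => p.1 + p.2) ⁻¹' A)))]
  rfl

lemma tvDist_conv_right (μ ν ρ : Measure ℕ) [IsProbabilityMeasure μ] [IsProbabilityMeasure ν]
    [IsProbabilityMeasure ρ] : tvDist (μ.conv ρ) (ν.conv ρ) ≤ tvDist μ ν := by
  apply tvDist_le
  intro A hA
  rw [Measure.conv_comm μ ρ, Measure.conv_comm ν ρ, conv_apply ρ μ A hA, conv_apply ρ ν A hA]
  set Ax : ℕ → Set ℕ := fun x => {y | x + y ∈ A} with hAx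
  have hAxm : ∀ x, MeasurableSet (Ax x) := fun x => (Set.to_countable _).measurableSet
  set F : ℕ → ℝ := fun x => (μ (Ax x)).toReal * mss ρ x with hF
  have hμ1 : ∀ x, (μ (Ax x)).toReal ≤ 1 := fun x => by
    simpa using ENNReal.toReal_mono ENNReal.one_ne_top (prob_le_one (μ := μ) (s := Ax x))
  set G : ℕ → ℝ := fun x => (ν (Ax x)).toReal * mss ρ x with hG
  have hν1 : ∀ x, (ν (Ax x)).toReal ≤ 1 := fun x => by
    simpa using ENNReal.toReal_mono ENNReal.one_ne_top (prob_le_one (μ := ν) (s := Ax x))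
  have htoF : (∑' x, μ (Ax x) * ρ {x}).toReal = ∑' x, F x := by
    rw [ENNReal.tsum_toReal_eq (fun x => ENNReal.mul_ne_top (measure_lt_top μ _).ne
      (measure_lt_top ρ _).ne)]
    exact tsum_congr fun x => ENNReal.toReal_mul
  have htoG : (∑' x, ν (Ax x) * ρ {x}).toReal = ∑' x, G x := by
    rw [ENNReal.tsum_toReal_eq (fun x => ENNReal.mul_ne_top (measure_lt_top ν _).ne
      (measure_lt_top ρ _).ne)]
    exact tsum_congr fun x => ENNReal.toReal_mul
  rw [htoF, htoG]
  have hFsum : Summable F := (summable_mss ρ).of_nonneg_of_le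
    (fun x => mul_nonneg ENNReal.toReal_nonneg (mss_nonneg ρ x))
    (fun x => by
      calc F x ≤ 1 * mss ρ x := mul_le_mul_of_nonneg_right (hμ1 x) (mss_nonneg ρ x)
        _ = mss ρ x := one_mul _)
  have hGsum : Summable G := (summable_mss ρ).of_nonneg_of_le
    (fun x => mul_nonneg ENNReal.toReal_nonneg (mss_nonneg ρ x))
    (fun x => by
      calc G x ≤ 1 * mss ρ x := mul_le_mul_of_nonneg_right (hν1 x) (mss_nonneg ρ x)
        _ = mss ρ x := one_mul _)
  have hbound : ∀ x, |F x - G x| ≤ tvDist μ ν * mss ρ x := by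
    intro x
    have : F x - G x = ((μ (Ax x)).toReal - (ν (Ax x)).toReal) * mss ρ x := by ring
    rw [this, abs_mul, abs_of_nonneg (mss_nonneg ρ x)]
    exact mul_le_mul_of_nonneg_right (le_tvDist μ ν (hAxm x)) (mss_nonneg ρ x)
  have htvd0 : 0 ≤ tvDist μ ν := tvDist_nonneg μ ν
  have hbsum : Summable (fun x => tvDist μ ν * mss ρ x) := (summable_mss ρ).mul_left _
  have habs : Summable (fun x => |F x - G x|) :=
    hbsum.of_nonneg_of_le (fun x => abs_nonneg _) hbound
  calc |∑' x, F x - ∑' x, G x| = |∑' x, (F x - G x)| := by rw [Summable.tsum_sub hFsum hGsum]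
    _ ≤ ∑' x, |F x - G x| := by
        simpa using norm_tsum_le_tsum_norm (f := fun x => F x - G x) (by simpa using habs)
    _ ≤ ∑' x, tvDist μ ν * mss ρ x := Summable.tsum_le_tsum hbound habs hbsum
    _ = tvDist μ ν * ∑' x, mss ρ x := tsum_mul_left
    _ = tvDist μ ν := by rw [tsum_mss]; ring

lemma tvDist_conv_left (μ ν ρ : Measure ℕ) [IsProbabilityMeasure μ] [IsProbabilityMeasure ν]
    [IsProbabilityMeasure ρ] : tvDist (ρ.conv μ) (ρ.conv ν) ≤ tvDist μ ν := by
  rw [Measure.conv_comm ρ μ, Measure.conv_comm ρ ν]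
  exact tvDist_conv_right μ ν ρ

end Conv
open scoped Nat

section Poisson

lemma poisson_singleton (r : NNReal) (k : ℕ) :
    poissonMeasure r {k} = ENNReal.ofReal (poissonPMFReal r k) := by
  rw [poissonMeasure_singleton]
  rfl

lemma poisson_mss (r : NNReal) (k : ℕ) :
    mss (poissonMeasure r) k = poissonPMFReal r k := by
  rw [mss, poisson_singleton, ENNReal.toReal_ofReal poissonPMFReal_nonneg]

lemma poisson_real_conv (a b : ℝ) (n : ℕ) :
    ∑ x ∈ Finset.range (n + 1),
      (Real.exp (-a) * a ^ x / (x)!) * (Real.exp (-b) * b ^ (n - x) / ((n - x))!)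
      = Real.exp (-(a + b)) * (a + b) ^ n / (n)! := by
  have key : ∀ x ∈ Finset.range (n + 1),
      (Real.exp (-a) * a ^ x / (x)!) * (Real.exp (-b) * b ^ (n - x) / ((n - x))!)
        = Real.exp (-(a + b)) / (n)! * (a ^ x * b ^ (n - x) * (n.choose x)) := by
    intro x hx
    have hxn : x ≤ n := Nat.lt_succ_iff.mp (Finset.mem_range.mp hx)
    rw [Nat.cast_choose ℝ hxn]
    have h1 : Real.exp (-(a + b)) = Real.exp (-a) * Real.exp (-b) := by
      rw [← Real.exp_add]; ring_nf
    rw [h1]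
    have hx0 : ((x)! : ℝ) ≠ 0 := by positivity
    have hnx0 : (((n - x))! : ℝ) ≠ 0 := by positivity
    have hn0 : ((n)! : ℝ) ≠ 0 := by positivity
    field_simp
  rw [Finset.sum_congr rfl key, ← Finset.mul_sum, ← add_pow]
  ring

lemma poisson_pmf_conv (a b : NNReal) (n : ℕ) :
    ∑ x ∈ Finset.range (n + 1), poissonPMFReal a x * poissonPMFReal b (n - x)
      = poissonPMFReal (a + b) n := by
  unfold poissonPMFReal
  push_cast
  exact poisson_real_conv a b n

lemma poisson_conv (a b : NNReal) :
    (poissonMeasure a).conv (poissonMeasure b) = poissonMeasure (a + b) := by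
  apply Measure.ext_of_singleton
  intro n
  rw [conv_apply _ _ {n} (measurableSet_singleton n)]
  have hterm : ∀ x, poissonMeasure b {y | x + y ∈ ({n} : Set ℕ)} * poissonMeasure a {x}
      = if x ≤ n then ENNReal.ofReal (poissonPMFReal a x * poissonPMFReal b (n - x)) else 0 := by
    intro x
    by_cases hx : x ≤ n
    · have hset : {y : ℕ | x + y ∈ ({n} : Set ℕ)} = {n - x} := by
        ext y; simp only [Set.mem_setOf_eq, Set.mem_singleton_iff]; omega
      rw [if_pos hx, hset, poisson_singleton, poisson_singleton,
        ← ENNReal.ofReal_mul poissonPMFReal_nonneg,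
        mul_comm (poissonPMFReal b (n - x))]
    · have hset : {y : ℕ | x + y ∈ ({n} : Set ℕ)} = ∅ := by
        ext y
        simp only [Set.mem_setOf_eq, Set.mem_singleton_iff, Set.mem_empty_iff_false, iff_false]
        omega
      rw [if_neg hx, hset, measure_empty, zero_mul]
  rw [tsum_congr hterm, tsum_eq_sum (s := Finset.range (n + 1))
    (by intro x hx; rw [if_neg]; exact fun h => hx (Finset.mem_range.mpr (Nat.lt_succ_of_le h)))]
  rw [Finset.sum_congr rfl (fun x hx => if_pos (Nat.lt_succ_iff.mp (Finset.mem_range.mp hx)))]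
  rw [← ENNReal.ofReal_sum_of_nonneg
    (fun i _ => mul_nonneg poissonPMFReal_nonneg poissonPMFReal_nonneg)]
  rw [poisson_singleton]
  congr 1
  exact poisson_pmf_conv a b n

end Poisson
section Bernoulli

lemma bernoulli_poisson_bound (β : Measure ℕ) [IsProbabilityMeasure β] (p : NNReal)
    (hp1 : (p : ℝ) ≤ 1) (h1 : β {1} = (p : ENNReal)) (h0 : β {0} = 1 - (p : ENNReal))
    (h2 : ∀ k, 2 ≤ k → β {k} = 0) :
    tvDist β (poissonMeasure p) ≤ (p : ℝ) ^ 2 := by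
  refine le_trans (tvDist_le_posPart β (poissonMeasure p)) ?_
  have hexp : (1 : ℝ) - p ≤ Real.exp (-(p : ℝ)) := by
    have := Real.add_one_le_exp (-(p : ℝ)); linarith
  have hple : (p : ENNReal) ≤ 1 := by
    have hn : p ≤ (1 : NNReal) := by exact_mod_cast hp1
    exact_mod_cast hn
  have hterm : ∀ k, k ≠ 1 → max (mss β k - mss (poissonMeasure p) k) 0 = 0 := by
    intro k hk
    have hle : mss β k ≤ mss (poissonMeasure p) k := by
      match k, hk with
      | 0, _ =>
        have hβ0 : mss β 0 = 1 - (p : ℝ) := by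
          rw [mss, h0, ENNReal.toReal_sub_of_le hple ENNReal.one_ne_top]
          simp
        rw [hβ0, poisson_mss]
        unfold poissonPMFReal
        simpa using hexp
      | (k + 2), _ =>
        have hz : mss β (k + 2) = 0 := by rw [mss, h2 (k + 2) (by omega)]; simp
        rw [hz, poisson_mss]
        exact poissonPMFReal_nonneg
    rw [max_eq_right (sub_nonpos.mpr hle)]
  have hβ1 : mss β 1 = (p : ℝ) := by rw [mss, h1]; simp
  have hsummable : Summable (fun k => max (mss β k - mss (poissonMeasure p) k) 0) :=
    (summable_mss β).of_nonneg_of_le (fun k => le_max_right _ _)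
      (fun k => max_le (sub_le_self _ (mss_nonneg _ k)) (mss_nonneg β k))
  rw [tsum_eq_single 1 hterm]
  rw [hβ1, poisson_mss]
  unfold poissonPMFReal
  simp only [pow_one, Nat.factorial_one, Nat.cast_one, div_one]
  apply max_le
  · have h1e : 1 - Real.exp (-(p : ℝ)) ≤ (p : ℝ) := by linarith
    calc (p : ℝ) - Real.exp (-(p : ℝ)) * p = (p : ℝ) * (1 - Real.exp (-(p : ℝ))) := by ring
      _ ≤ (p : ℝ) * p := mul_le_mul_of_nonneg_left h1e p.coe_nonneg
      _ = (p : ℝ) ^ 2 := by ring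
  · positivity

end Bernoulli

section MapAdd

lemma map_add_eq_conv {Ω : Type*} [MeasurableSpace Ω] (P : Measure Ω) [IsProbabilityMeasure P]
    (f g : Ω → ℕ) (hf : Measurable f) (hg : Measurable g) (h : IndepFun f g P) :
    P.map (fun ω => f ω + g ω) = (P.map f).conv (P.map g) := by
  have hmap := (indepFun_iff_map_prod_eq_prod_map_map hf.aemeasurable hg.aemeasurable).mp h
  rw [Measure.conv, ← hmap,
    Measure.map_map (measurable_of_countable _) (hf.prodMk hg)]
  rfl

end MapAdd

/-- Le Cam's inequality: if `X i` are independent Bernoulli(`p i`) random variables and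
`Z` is Poisson with mean `M = ∑ p i`, then `d_TV(L(∑ X i), Poisson(M)) ≤ ∑ (p i)²`. -/
theorem stmt1 {Ω : Type*} [MeasurableSpace Ω] (P : Measure Ω) [IsProbabilityMeasure P]
    (n : ℕ) (X : Fin n → Ω → ℕ) (hmeas : ∀ i, Measurable (X i))
    (hval : ∀ i ω, X i ω = 0 ∨ X i ω = 1)
    (hindep : iIndepFun X P)
    (p : Fin n → NNReal) (hp : ∀ i, P {ω | X i ω = 1} = (p i : ENNReal)) :
    tvDist (P.map (fun ω => ∑ i, X i ω)) (poissonMeasure (∑ i, p i)) ≤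
      ∑ i, (p i : ℝ) ^ 2 := by
  have key : ∀ s : Finset (Fin n),
      tvDist (P.map (fun ω => ∑ i ∈ s, X i ω)) (poissonMeasure (∑ i ∈ s, p i)) ≤
        ∑ i ∈ s, (p i : ℝ) ^ 2 := by
    intro s
    induction s using Finset.induction_on with
    | empty =>
      simp only [Finset.sum_empty]
      have hmap : P.map (fun _ : Ω => (0 : ℕ)) = Measure.dirac 0 := by
        rw [Measure.map_const]; simp
      rw [hmap]
      have hb := bernoulli_poisson_bound (Measure.dirac 0) 0 (by norm_num)
        (by rw [Measure.dirac_apply' _ (measurableSet_singleton 1)]; simp)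
        (by rw [Measure.dirac_apply' _ (measurableSet_singleton 0)]; simp)
        (fun k hk => by
          rw [Measure.dirac_apply' _ (measurableSet_singleton k)]
          simp only [Set.indicator_apply, Set.mem_singleton_iff]
          rw [if_neg]; omega)
      simpa using hb
    | insert a s ha ih =>
      set Sf : Ω → ℕ := fun ω => ∑ i ∈ s, X i ω with hSf
      have hSmeas : Measurable Sf := Finset.measurable_sum s (fun i _ => hmeas i)
      have hind : IndepFun (X a) Sf P := by
        have h := hindep.indepFun_finsetSum_of_notMem hmeas ha
        have he : (∑ j ∈ s, X j) = Sf := by funext ω; simp [hSf, Finset.sum_apply]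
        rw [he] at h
        exact h.symm
      haveI : IsProbabilityMeasure (P.map (X a)) :=
        Measure.isProbabilityMeasure_map (hmeas a).aemeasurable
      haveI : IsProbabilityMeasure (P.map Sf) := Measure.isProbabilityMeasure_map hSmeas.aemeasurable
      have hmap : P.map (fun ω => ∑ i ∈ insert a s, X i ω)
          = (P.map (X a)).conv (P.map Sf) := by
        have he : (fun ω => ∑ i ∈ insert a s, X i ω) = fun ω => X a ω + Sf ω := by
          funext ω; rw [Finset.sum_insert ha]
        rw [he, map_add_eq_conv P (X a) Sf (hmeas a) hSmeas hind]
      rw [hmap, Finset.sum_insert ha, Finset.sum_insert ha,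
        ← poisson_conv (p a) (∑ i ∈ s, p i)]
      -- Bernoulli bound for X a
      have hm1 : MeasurableSet {ω | X a ω = 1} := hmeas a (measurableSet_singleton 1)
      have hp1e : (p a : ENNReal) ≤ 1 := by rw [← hp a]; exact prob_le_one
      have hp1 : (p a : ℝ) ≤ 1 := by
        have := ENNReal.toReal_mono ENNReal.one_ne_top hp1e
        simpa using this
      have hXa1 : P.map (X a) {1} = (p a : ENNReal) := by
        rw [Measure.map_apply (hmeas a) (measurableSet_singleton 1), ← hp a]
        rfl
      have hXa0 : P.map (X a) {0} = 1 - (p a : ENNReal) := by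
        rw [Measure.map_apply (hmeas a) (measurableSet_singleton 0)]
        have he : X a ⁻¹' {0} = {ω | X a ω = 1}ᶜ := by
          ext ω
          have := hval a ω
          simp only [Set.mem_preimage, Set.mem_singleton_iff, Set.mem_compl_iff,
            Set.mem_setOf_eq]
          omega
        rw [he, prob_compl_eq_one_sub hm1, hp a]
      have hXa2 : ∀ k, 2 ≤ k → P.map (X a) {k} = 0 := by
        intro k hk
        rw [Measure.map_apply (hmeas a) (measurableSet_singleton k)]
        have he : X a ⁻¹' {k} = ∅ := by
          ext ω
          have := hval a ω
          simp only [Set.mem_preimage, Set.mem_singleton_iff, Set.mem_empty_iff_false,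
            iff_false]
          omega
        rw [he, measure_empty]
      have hbern := bernoulli_poisson_bound (P.map (X a)) (p a) hp1 hXa1 hXa0 hXa2
      calc tvDist ((P.map (X a)).conv (P.map Sf))
            ((poissonMeasure (p a)).conv (poissonMeasure (∑ i ∈ s, p i)))
          ≤ tvDist ((P.map (X a)).conv (P.map Sf))
              ((P.map (X a)).conv (poissonMeasure (∑ i ∈ s, p i)))
            + tvDist ((P.map (X a)).conv (poissonMeasure (∑ i ∈ s, p i)))
              ((poissonMeasure (p a)).conv (poissonMeasure (∑ i ∈ s, p i))) :=
            tvDist_triangle _ _ _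
        _ ≤ tvDist (P.map Sf) (poissonMeasure (∑ i ∈ s, p i))
            + tvDist (P.map (X a)) (poissonMeasure (p a)) :=
            add_le_add (tvDist_conv_left _ _ _) (tvDist_conv_right _ _ _)
        _ ≤ (∑ i ∈ s, (p i : ℝ) ^ 2) + (p a : ℝ) ^ 2 := add_le_add ih hbern
        _ = (p a : ℝ) ^ 2 + ∑ i ∈ s, (p i : ℝ) ^ 2 := by ring
  exact key Finset.univ
end

section
/- The total variation distance between a Bernoulli(p) distribution and a Poisson(p) distribution is at most p². -/
open MeasureTheory ProbabilityTheory
open Real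

open Classical in
lemma bern_apply (p : NNReal) (hp : p ≤ 1) (A : Set ℕ) (hA : MeasurableSet A) :
    ((((p : ENNReal)) • Measure.dirac (1:ℕ) + (1 - (p : ENNReal)) • Measure.dirac (0:ℕ)) A).toReal
      = (if (1:ℕ) ∈ A then (p:ℝ) else 0) + (if (0:ℕ) ∈ A then 1 - (p:ℝ) else 0) := by
  have h1p : (1 - (p:ENNReal)).toReal = 1 - (p:ℝ) := by
    rw [ENNReal.toReal_sub_of_le (by exact_mod_cast hp) (by simp)]; simp
  have hfin : (1 - (p:ENNReal)) ≠ ⊤ := ne_top_of_le_ne_top (by simp) tsub_le_self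
  rw [Measure.add_apply, Measure.smul_apply, Measure.smul_apply, smul_eq_mul, smul_eq_mul,
    Measure.dirac_apply' _ hA, Measure.dirac_apply' _ hA]
  by_cases h1 : (1:ℕ) ∈ A <;> by_cases h0 : (0:ℕ) ∈ A <;>
    simp [h0, h1, Set.indicator_of_mem, Set.indicator_of_notMem,
      ENNReal.toReal_add (ENNReal.coe_ne_top (r := p)) hfin, h1p]

lemma poisson_singleton_s2 (p : NNReal) (n : ℕ) :
    ((poissonMeasure p) {n}).toReal = poissonPMFReal p n := by
  rw [poissonMeasure_singleton,
    show ENNReal.ofReal (exp (-(p:ℝ)) * (p:ℝ) ^ n / (Nat.factorial n)) = ENNReal.ofReal (poissonPMFReal p n) from rfl,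
    ENNReal.toReal_ofReal poissonPMFReal_nonneg]

open Classical in
lemma poisson_inter_pair (p : NNReal) (A : Set ℕ) :
    ((poissonMeasure p) (A ∩ {0,1})).toReal
      = (if (1:ℕ) ∈ A then (p:ℝ) * exp (-(p:ℝ)) else 0)
        + (if (0:ℕ) ∈ A then exp (-(p:ℝ)) else 0) := by
  have e0 : poissonPMFReal p 0 = exp (-(p:ℝ)) := by simp [poissonPMFReal]
  have e1 : poissonPMFReal p 1 = (p:ℝ) * exp (-(p:ℝ)) := by simp [poissonPMFReal]; ring
  by_cases h1 : (1:ℕ) ∈ A <;> by_cases h0 : (0:ℕ) ∈ A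
  · have hs : A ∩ {0,1} = {0} ∪ {1} := by
      ext x; simp only [Set.mem_inter_iff, Set.mem_insert_iff, Set.mem_singleton_iff,
        Set.mem_union]
      constructor
      · rintro ⟨_, h⟩; exact h
      · rintro (rfl|rfl) <;> simp [h0, h1]
    rw [hs, measure_union (by simp) (measurableSet_singleton 1),
      ENNReal.toReal_add (measure_ne_top _ _) (measure_ne_top _ _),
      poisson_singleton_s2, poisson_singleton_s2]
    simp [e0, e1, h0, h1, add_comm]
  · have hs : A ∩ {0,1} = {1} := by
      ext x; simp only [Set.mem_inter_iff, Set.mem_insert_iff, Set.mem_singleton_iff]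
      constructor
      · rintro ⟨hx, rfl|rfl⟩; exacts [absurd hx h0, rfl]
      · rintro rfl; exact ⟨h1, Or.inr rfl⟩
    rw [hs, poisson_singleton_s2]; simp [e1, h0, h1]
  · have hs : A ∩ {0,1} = {0} := by
      ext x; simp only [Set.mem_inter_iff, Set.mem_insert_iff, Set.mem_singleton_iff]
      constructor
      · rintro ⟨hx, rfl|rfl⟩; exacts [rfl, absurd hx h1]
      · rintro rfl; exact ⟨h0, Or.inl rfl⟩
    rw [hs, poisson_singleton_s2]; simp [e0, h0, h1]
  · have hs : A ∩ {0,1} = ∅ := by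
      ext x; simp only [Set.mem_inter_iff, Set.mem_insert_iff, Set.mem_singleton_iff,
        Set.mem_empty_iff_false, iff_false, not_and]
      rintro hx (rfl|rfl) <;> [exact h0 hx; exact h1 hx]
    rw [hs]; simp [h0, h1]

lemma poisson_pair (p : NNReal) :
    ((poissonMeasure p) {0,1}).toReal = exp (-(p:ℝ)) + (p:ℝ) * exp (-(p:ℝ)) := by
  have := poisson_inter_pair p {0,1}
  simp only [Set.inter_self] at this
  rw [this]; simp [add_comm]

/-- The total variation distance between a Bernoulli(p) distribution (on ℕ) and a
Poisson(p) distribution is at most `p²`. -/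
theorem stmt2 (p : NNReal) (hp : p ≤ 1) :
    tvDist ((p : ENNReal) • Measure.dirac (1 : ℕ) + (1 - (p : ENNReal)) • Measure.dirac (0 : ℕ))
      (poissonMeasure p) ≤ (p : ℝ) ^ 2 := by
  apply ciSup_le
  rintro ⟨A, hA⟩
  have hp' : (p:ℝ) ≤ 1 := by exact_mod_cast hp
  have hp0 : (0:ℝ) ≤ p := p.2
  have he1 : 1 - (p:ℝ) ≤ exp (-(p:ℝ)) := by
    nlinarith [Real.add_one_le_exp (-(p:ℝ))]
  have he2 : exp (-(p:ℝ)) ≤ 1 := by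
    calc exp (-(p:ℝ)) ≤ exp 0 := exp_le_exp.mpr (by linarith)
    _ = 1 := exp_zero
  have he0 : (0:ℝ) ≤ exp (-(p:ℝ)) := (exp_pos _).le
  simp only [tvDist]
  rw [bern_apply p hp A hA]
  have hlow : ((poissonMeasure p) (A ∩ {0,1})).toReal ≤ ((poissonMeasure p) A).toReal :=
    ENNReal.toReal_mono (measure_ne_top _ _) (measure_mono Set.inter_subset_left)
  have hup : ((poissonMeasure p) A).toReal ≤ ((poissonMeasure p) (A ∩ {0,1})).toReal
      + (1 - (exp (-(p:ℝ)) + (p:ℝ) * exp (-(p:ℝ)))) := by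
    have hsub : A ⊆ (A ∩ {0,1}) ∪ ({0,1} : Set ℕ)ᶜ := by
      intro x hx
      by_cases hx2 : x ∈ ({0,1} : Set ℕ)
      exacts [Or.inl ⟨hx, hx2⟩, Or.inr hx2]
    have h2 : (poissonMeasure p) A
        ≤ (poissonMeasure p) (A ∩ {0,1}) + (poissonMeasure p) ({0,1} : Set ℕ)ᶜ :=
      (measure_mono hsub).trans (measure_union_le _ _)
    have h3 := ENNReal.toReal_mono
      (ENNReal.add_ne_top.mpr ⟨measure_ne_top _ _, measure_ne_top _ _⟩) h2
    rw [ENNReal.toReal_add (measure_ne_top _ _) (measure_ne_top _ _)] at h3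
    have hc : ((poissonMeasure p) ({0,1} : Set ℕ)ᶜ).toReal
        = 1 - (exp (-(p:ℝ)) + (p:ℝ) * exp (-(p:ℝ))) := by
      rw [measure_compl (by measurability) (measure_ne_top _ _), measure_univ,
        ENNReal.toReal_sub_of_le prob_le_one (by simp)]
      simp [poisson_pair]
    rw [hc] at h3
    exact h3
  rw [poisson_inter_pair] at hlow hup
  rw [abs_sub_le_iff]
  constructor <;> by_cases h1 : (1:ℕ) ∈ A <;> by_cases h0 : (0:ℕ) ∈ A <;>
    simp only [h0, h1, if_true, if_false] at hlow hup ⊢ <;>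
    nlinarith [mul_nonneg hp0 he0]
end
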